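/- (Proposition 1, converse direction, PE part) Let G : 𝕏×𝕏×ℙ×ℙ → ℝ_{≥0} be a joint i-IOSS Lyapunov function, i.e., there exist symmetric positive definite matrices G_lo, G_hi (of size (n+o)×(n+o)), Q, R, and η ∈ [0,1) such that ‖(x−x̃, p−p̃)‖²_{G_lo} ≤ G(x,x̃,p,p̃) ≤ ‖(x−x̃, p−p̃)‖²_{G_hi} and G(f(x,u,w,p), f(x̃,u,w̃,p̃), p, p̃) ≤ η G(x,x̃,p,p̃) + ‖w−w̃‖²_Q + ‖h(x,u,w,p)−h(x̃,u,w̃,p̃)‖²_R for all (x,u,w,p),(x̃,u,w̃,p̃) ∈ ℤ. Then for every T ∈ ℕ with λ_min(G_lo) − λ_max(G_hi)η^T > 0 (and such T exists since η < 1), every K ≥ T, and every pair of length-K system trajectories in ℤ with common inputs and outputs y_t, ỹ_t: (λ_min(G_lo) − λ_max(G_hi)η^T)‖p−p̃‖² ≤ λ_max(G_hi)η^K‖x_0−x̃_0‖² + Σ_{j=1}^{K} η^{j−1}(‖w_{K−j}−w̃_{K−j}‖²_Q + ‖y_{K−j}−ỹ_{K−j}‖²_R); in particular, Assumption 3 (uniform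 persistent excitation) holds with S_p := (λ_min(G_lo)−λ_max(G_hi)η^T)I, P_p := λ_max(G_hi)I, Q_p := Q, R_p := R, η_p := η. -/

import Mathlib

open Matrix Finset

/-- Weighted squared norm `‖v‖_Q² = vᵀ Q v`. -/
noncomputable def quad {ι : Type*} [Fintype ι] (Q : Matrix ι ι ℝ) (v : ι → ℝ) : ℝ :=
  v ⬝ᵥ Q.mulVec v

/-- Membership in the constraint set `ℤ = {(x,u,w,p) ∈ 𝕏×𝕌×𝕎×ℙ : f(x,u,w,p) ∈ 𝕏}`. -/
def ZmemS {n m q o : ℕ}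
    (f : (Fin n → ℝ) → (Fin m → ℝ) → (Fin q → ℝ) → (Fin o → ℝ) → (Fin n → ℝ))
    (Xs : Set (Fin n → ℝ)) (Us : Set (Fin m → ℝ)) (Ws : Set (Fin q → ℝ))
    (Ps : Set (Fin o → ℝ))
    (xx : Fin n → ℝ) (uu : Fin m → ℝ) (ww : Fin q → ℝ) (pp : Fin o → ℝ) : Prop :=
  xx ∈ Xs ∧ uu ∈ Us ∧ ww ∈ Ws ∧ pp ∈ Ps ∧ f xx uu ww pp ∈ Xs

lemma dot_self_nonneg' {ι : Type*} [Fintype ι] (v : ι → ℝ) : 0 ≤ v ⬝ᵥ v :=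
  Finset.sum_nonneg fun i _ => mul_self_nonneg _

lemma quad_smul_one {ι : Type*} [Fintype ι] [DecidableEq ι] (c : ℝ) (v : ι → ℝ) :
    quad (c • (1 : Matrix ι ι ℝ)) v = c * (v ⬝ᵥ v) := by
  simp [quad, smul_mulVec, one_mulVec, dotProduct_smul, smul_eq_mul]

lemma quad_smul_vec {ι : Type*} [Fintype ι] (A : Matrix ι ι ℝ) (c : ℝ) (v : ι → ℝ) :
    quad A (c • v) = c ^ 2 * quad A v := by
  simp [quad, mulVec_smul, dotProduct_smul, smul_dotProduct, smul_eq_mul]; ring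

lemma quad_posdef_pos {ι : Type*} [Fintype ι] [DecidableEq ι] {A : Matrix ι ι ℝ}
    (hA : A.PosDef) {v : ι → ℝ} (hv : v ≠ 0) : 0 < quad A v := by
  simpa [quad] using hA.dotProduct_mulVec_pos hv

lemma rayleigh_min_pos {ι : Type*} [Fintype ι] [DecidableEq ι] [Nonempty ι]
    {A : Matrix ι ι ℝ} (hA : A.PosDef) :
    ∃ c > 0, ∀ v : ι → ℝ, c * (v ⬝ᵥ v) ≤ quad A v := by
  have h1 : Continuous fun v : ι → ℝ => quad A v := by
    unfold quad dotProduct Matrix.mulVec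
    exact continuous_finset_sum _ fun i _ => (continuous_apply i).mul
      (continuous_finset_sum _ fun j _ => continuous_const.mul (continuous_apply j))
  have hcont : Continuous fun v : EuclideanSpace ℝ ι => quad A v :=
    h1.comp (PiLp.continuousLinearEquiv 2 ℝ fun _ : ι => ℝ).continuous
  have hcomp : IsCompact (Metric.sphere (0 : EuclideanSpace ℝ ι) 1) :=
    isCompact_sphere _ _
  have hne : (Metric.sphere (0 : EuclideanSpace ℝ ι) 1).Nonempty :=
    NormedSpace.sphere_nonempty.mpr zero_le_one
  obtain ⟨v0, hv0mem, hv0min⟩ := hcomp.exists_isMinOn hne hcont.continuousOn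
  have hv0ne : (v0 : ι → ℝ) ≠ 0 := by
    intro h0
    have : ‖v0‖ = 1 := by simpa using hv0mem
    rw [show v0 = 0 from PiLp.ext fun i => congrFun h0 i] at this
    simp at this
  refine ⟨quad A v0, quad_posdef_pos hA hv0ne, fun v => ?_⟩
  by_cases hv : v = 0
  · simp [hv, quad]
  · set ve : EuclideanSpace ℝ ι := WithLp.toLp 2 v with hve
    have hvene : ve ≠ 0 := fun h0 => hv (by simpa [hve] using congrArg WithLp.ofLp h0)
    set t : ℝ := ‖ve‖ with ht
    have htpos : 0 < t := norm_pos_iff.mpr hvene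
    have hmem : (t⁻¹ • ve) ∈ Metric.sphere (0 : EuclideanSpace ℝ ι) 1 := by
      rw [mem_sphere_zero_iff_norm, norm_smul, Real.norm_eq_abs,
        abs_of_pos (inv_pos.mpr htpos), ← ht, inv_mul_cancel₀ htpos.ne']
    have hle := hv0min hmem
    have hdot : v ⬝ᵥ v = t ^ 2 := by
      have h2 : t = Real.sqrt (∑ i, ‖v i‖ ^ 2) := EuclideanSpace.norm_eq ve
      rw [h2, Real.sq_sqrt (Finset.sum_nonneg fun i _ => sq_nonneg _)]
      simp [hve, dotProduct, Real.norm_eq_abs, sq_abs, sq]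
    have hq : quad A (t⁻¹ • v) = t⁻¹ ^ 2 * quad A v := quad_smul_vec A t⁻¹ v
    have hfin : quad A v0 ≤ t⁻¹ ^ 2 * quad A v := by
      have : quad A (t⁻¹ • ve) = t⁻¹ ^ 2 * quad A v := by
        rw [hve, WithLp.ofLp_toLp]; exact hq
      simpa [this] using hle
    calc quad A v0 * (v ⬝ᵥ v) = quad A v0 * t ^ 2 := by rw [hdot]
      _ ≤ (t⁻¹ ^ 2 * quad A v) * t ^ 2 := by nlinarith [sq_nonneg t]
      _ = quad A v := by field_simp

lemma iterate_bound (η : ℝ) (hη : 0 ≤ η) (V d : ℕ → ℝ) :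
    ∀ K : ℕ, (∀ s < K, V (s + 1) ≤ η * V s + d s) →
      V K ≤ η ^ K * V 0 + ∑ j ∈ Finset.range K, η ^ (K - 1 - j) * d j := by
  intro K
  induction K with
  | zero => intro _; simp
  | succ K ih =>
    intro hstep
    have h1 := ih fun s hs => hstep s (hs.trans (Nat.lt_succ_self K))
    have h2 := hstep K (Nat.lt_succ_self K)
    have hsum : ∑ j ∈ Finset.range (K + 1), η ^ (K + 1 - 1 - j) * d j
        = η * ∑ j ∈ Finset.range K, η ^ (K - 1 - j) * d j + d K := by
      rw [Finset.sum_range_succ, Finset.mul_sum]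
      simp only [Nat.add_sub_cancel, Nat.sub_self, pow_zero, one_mul]
      congr 1
      apply Finset.sum_congr rfl
      intro j hj
      have hjK : j < K := Finset.mem_range.mp hj
      have he : K - j = (K - 1 - j) + 1 := by omega
      rw [he, pow_succ', mul_assoc]
    calc V (K + 1) ≤ η * V K + d K := h2
      _ ≤ η * (η ^ K * V 0 + ∑ j ∈ Finset.range K, η ^ (K - 1 - j) * d j) + d K := by
          have := mul_le_mul_of_nonneg_left h1 hη
          linarith
      _ = η ^ (K + 1) * V 0 + ∑ j ∈ Finset.range (K + 1), η ^ (K + 1 - 1 - j) * d j := by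
          rw [hsum]; ring

/-- **Proposition 1, converse direction, PE part.**
A joint i-IOSS Lyapunov function `G` for the augmented state implies uniform persistent
excitation: for every `T` with `λ_min(G_lo) − λ_max(G_hi)η^T > 0` (such `T` exists since
`η < 1`), every `K ≥ T` and every pair of length-`K` trajectories with common inputs,
`(λ_min(G_lo) − λ_max(G_hi)η^T)‖p−p̃‖² ≤ λ_max(G_hi)η^K‖x_0−x̃_0‖²
 + Σ_{j=1}^{K} η^{j−1}(‖w_{K−j}−w̃_{K−j}‖²_Q + ‖y_{K−j}−ỹ_{K−j}‖²_R)`;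
in particular the pair belongs to `𝔼_K` with `S_p := (λ_min(G_lo)−λ_max(G_hi)η^T)I`,
`P_p := λ_max(G_hi)I`, `Q_p := Q`, `R_p := R`, `η_p := η`. -/
theorem joint_iIOSS_implies_uniform_PE
    {n m q o r : ℕ}
    (f : (Fin n → ℝ) → (Fin m → ℝ) → (Fin q → ℝ) → (Fin o → ℝ) → (Fin n → ℝ))
    (h : (Fin n → ℝ) → (Fin m → ℝ) → (Fin q → ℝ) → (Fin o → ℝ) → (Fin r → ℝ))
    (Xs : Set (Fin n → ℝ)) (Us : Set (Fin m → ℝ)) (Ws : Set (Fin q → ℝ))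
    (Ps : Set (Fin o → ℝ))
    (Glo Ghi : Matrix (Fin n ⊕ Fin o) (Fin n ⊕ Fin o) ℝ)
    (Q : Matrix (Fin q) (Fin q) ℝ) (R : Matrix (Fin r) (Fin r) ℝ)
    (hGlo : Glo.PosDef) (hGhi : Ghi.PosDef) (hQ : Q.PosDef) (hR : R.PosDef)
    (η : ℝ) (hη0 : 0 ≤ η) (hη1 : η < 1)
    (G : (Fin n → ℝ) → (Fin n → ℝ) → (Fin o → ℝ) → (Fin o → ℝ) → ℝ)
    (hGnn : ∀ a b pp ppt, a ∈ Xs → b ∈ Xs → pp ∈ Ps → ppt ∈ Ps → 0 ≤ G a b pp ppt)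
    (hGbnd : ∀ a b pp ppt, a ∈ Xs → b ∈ Xs → pp ∈ Ps → ppt ∈ Ps →
      quad Glo (Sum.elim (a - b) (pp - ppt)) ≤ G a b pp ppt
        ∧ G a b pp ppt ≤ quad Ghi (Sum.elim (a - b) (pp - ppt)))
    (hGdiss : ∀ xx uu ww pp xxt wwt ppt,
      ZmemS f Xs Us Ws Ps xx uu ww pp → ZmemS f Xs Us Ws Ps xxt uu wwt ppt →
      G (f xx uu ww pp) (f xxt uu wwt ppt) pp ppt
        ≤ η * G xx xxt pp ppt + quad Q (ww - wwt)
          + quad R (h xx uu ww pp - h xxt uu wwt ppt))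
    (lminGlo lmaxGhi : ℝ)
    (hlmin : IsGreatest {l : ℝ | ∀ v : Fin n ⊕ Fin o → ℝ, l * (v ⬝ᵥ v) ≤ quad Glo v}
        lminGlo)
    (hlmax : IsLeast {l : ℝ | ∀ v : Fin n ⊕ Fin o → ℝ, quad Ghi v ≤ l * (v ⬝ᵥ v)}
        lmaxGhi) :
    (∃ T : ℕ, 0 < lminGlo - lmaxGhi * η ^ T)
    ∧ ∀ T : ℕ, 0 < lminGlo - lmaxGhi * η ^ T →
      ∀ K : ℕ, T ≤ K →
      ∀ (x xt : ℕ → Fin n → ℝ) (u : ℕ → Fin m → ℝ) (w wt : ℕ → Fin q → ℝ)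
        (p pt : Fin o → ℝ) (y yt : ℕ → Fin r → ℝ),
      x 0 ∈ Xs → xt 0 ∈ Xs → p ∈ Ps → pt ∈ Ps →
      (∀ s < K, ZmemS f Xs Us Ws Ps (x s) (u s) (w s) p) →
      (∀ s < K, ZmemS f Xs Us Ws Ps (xt s) (u s) (wt s) pt) →
      (∀ s < K, x (s + 1) = f (x s) (u s) (w s) p) →
      (∀ s < K, xt (s + 1) = f (xt s) (u s) (wt s) pt) →
      (∀ s < K, y s = h (x s) (u s) (w s) p) →
      (∀ s < K, yt s = h (xt s) (u s) (wt s) pt) →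
      ((lminGlo - lmaxGhi * η ^ T) * ((p - pt) ⬝ᵥ (p - pt))
          ≤ lmaxGhi * η ^ K * ((x 0 - xt 0) ⬝ᵥ (x 0 - xt 0))
            + ∑ j ∈ Finset.range K, η ^ j *
                (quad Q (w (K - 1 - j) - wt (K - 1 - j))
                  + quad R (y (K - 1 - j) - yt (K - 1 - j))))
        ∧ quad (((lminGlo - lmaxGhi * η ^ T) •
              (1 : Matrix (Fin o) (Fin o) ℝ))) (p - pt)
            ≤ η ^ K * quad ((lmaxGhi • (1 : Matrix (Fin n) (Fin n) ℝ))) (x 0 - xt 0)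
              + ∑ j ∈ Finset.range K, η ^ (K - 1 - j) *
                  (quad Q (w j - wt j) + quad R (y j - yt j)) := by
  -- positivity of lminGlo and nonnegativity of lmaxGhi
  have hlminpos : 0 < lminGlo := by
    rcases isEmpty_or_nonempty (Fin n ⊕ Fin o) with hemp | hne
    · exfalso
      have h1 : (lminGlo + 1) ∈ {l : ℝ | ∀ v : Fin n ⊕ Fin o → ℝ,
          l * (v ⬝ᵥ v) ≤ quad Glo v} := by
        intro v; simp [dotProduct, quad]
      have := hlmin.2 h1
      linarith
    · obtain ⟨c, hc, hcall⟩ := rayleigh_min_pos hGlo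
      exact hc.trans_le (hlmin.2 hcall)
  have hlmaxnn : 0 ≤ lmaxGhi := by
    rcases isEmpty_or_nonempty (Fin n ⊕ Fin o) with hemp | hne
    · exfalso
      have h1 : (lmaxGhi - 1) ∈ {l : ℝ | ∀ v : Fin n ⊕ Fin o → ℝ,
          quad Ghi v ≤ l * (v ⬝ᵥ v)} := by
        intro v; simp [dotProduct, quad]
      have := hlmax.2 h1
      linarith
    · obtain ⟨i⟩ := hne
      set v : Fin n ⊕ Fin o → ℝ := Pi.single i 1 with hv
      have hdot : v ⬝ᵥ v = 1 := by
        simp [hv, dotProduct, Pi.single_apply]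
      have hq : 0 ≤ quad Ghi v := by
        have h2 := hGhi.posSemidef.re_dotProduct_nonneg v
        simpa [quad] using h2
      have h3 := hlmax.1 v
      rw [hdot, mul_one] at h3
      linarith
  constructor
  · -- existence of T
    obtain ⟨T, hT⟩ := exists_pow_lt_of_lt_one
      (div_pos hlminpos (by linarith : (0:ℝ) < lmaxGhi + 1)) hη1
    refine ⟨T, ?_⟩
    have h1 : lmaxGhi * η ^ T ≤ (lmaxGhi + 1) * η ^ T :=
      mul_le_mul_of_nonneg_right (by linarith) (pow_nonneg hη0 T)
    have h2 := (lt_div_iff₀ (show (0:ℝ) < lmaxGhi + 1 by linarith)).mp hT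
    nlinarith [pow_nonneg hη0 T]
  · intro T hT K hK x xt u w wt p pt y yt hx0 hxt0 hp hpt hZ hZt hrec hrect hy hyt
    -- the dissipation iteration
    have hstep : ∀ s < K, G (x (s+1)) (xt (s+1)) p pt
        ≤ η * G (x s) (xt s) p pt
          + (quad Q (w s - wt s) + quad R (y s - yt s)) := by
      intro s hs
      have h1 := hGdiss (x s) (u s) (w s) p (xt s) (wt s) pt (hZ s hs) (hZt s hs)
      rw [← hrec s hs, ← hrect s hs, ← hy s hs, ← hyt s hs] at h1
      linarith
    have hVK := iterate_bound η hη0 (fun t => G (x t) (xt t) p pt)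
      (fun s => quad Q (w s - wt s) + quad R (y s - yt s)) K hstep
    -- endpoints are in Xs
    have hxK : x K ∈ Xs := by
      rcases Nat.eq_zero_or_pos K with h0 | hpos
      · rw [h0]; exact hx0
      · have hlt : K - 1 < K := by omega
        have hmem := (hZ (K-1) hlt).2.2.2.2
        have he : K - 1 + 1 = K := by omega
        rw [← hrec (K-1) hlt, he] at hmem
        exact hmem
    have hxtK : xt K ∈ Xs := by
      rcases Nat.eq_zero_or_pos K with h0 | hpos
      · rw [h0]; exact hxt0
      · have hlt : K - 1 < K := by omega
        have hmem := (hZt (K-1) hlt).2.2.2.2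
        have he : K - 1 + 1 = K := by omega
        rw [← hrect (K-1) hlt, he] at hmem
        exact hmem
    set pd : ℝ := (p - pt) ⬝ᵥ (p - pt) with hpd
    set xd0 : ℝ := (x 0 - xt 0) ⬝ᵥ (x 0 - xt 0) with hxd0
    set S : ℝ := ∑ j ∈ Finset.range K, η ^ (K - 1 - j) *
        (quad Q (w j - wt j) + quad R (y j - yt j)) with hS
    have hpdnn : 0 ≤ pd := dot_self_nonneg' _
    have hxdnn : 0 ≤ xd0 := dot_self_nonneg' _
    -- lower bound at time K
    have hlow : lminGlo * pd ≤ G (x K) (xt K) p pt := by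
      have h1 := (hGbnd (x K) (xt K) p pt hxK hxtK hp hpt).1
      have h2 := hlmin.1 (Sum.elim (x K - xt K) (p - pt))
      have h3 : Sum.elim (x K - xt K) (p - pt) ⬝ᵥ Sum.elim (x K - xt K) (p - pt)
          = (x K - xt K) ⬝ᵥ (x K - xt K) + pd :=
        sumElim_dotProduct_sumElim _ _ _ _
      have h4 := dot_self_nonneg' (x K - xt K)
      nlinarith [hlminpos]
    -- upper bound at time 0
    have hhigh : G (x 0) (xt 0) p pt ≤ lmaxGhi * (xd0 + pd) := by
      have h1 := (hGbnd (x 0) (xt 0) p pt hx0 hxt0 hp hpt).2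
      have h2 := hlmax.1 (Sum.elim (x 0 - xt 0) (p - pt))
      have h3 : Sum.elim (x 0 - xt 0) (p - pt) ⬝ᵥ Sum.elim (x 0 - xt 0) (p - pt)
          = xd0 + pd := sumElim_dotProduct_sumElim _ _ _ _
      rw [h3] at h2
      linarith
    have hc1 : η ^ K * G (x 0) (xt 0) p pt ≤ η ^ K * (lmaxGhi * (xd0 + pd)) :=
      mul_le_mul_of_nonneg_left hhigh (pow_nonneg hη0 K)
    have hmainK : (lminGlo - lmaxGhi * η ^ K) * pd ≤ lmaxGhi * η ^ K * xd0 + S := by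
      nlinarith [hVK, hlow, hc1]
    have hTK : lmaxGhi * η ^ K ≤ lmaxGhi * η ^ T :=
      mul_le_mul_of_nonneg_left (pow_le_pow_of_le_one hη0 hη1.le hK) hlmaxnn
    have hmainT : (lminGlo - lmaxGhi * η ^ T) * pd ≤ lmaxGhi * η ^ K * xd0 + S := by
      nlinarith [hmainK, hTK, hpdnn]
    constructor
    · -- claim 1: reindex the sum
      have hre : ∑ j ∈ Finset.range K, η ^ j *
            (quad Q (w (K - 1 - j) - wt (K - 1 - j))
              + quad R (y (K - 1 - j) - yt (K - 1 - j))) = S := by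
        rw [hS]
        conv_rhs => rw [← Finset.sum_range_reflect]
        apply Finset.sum_congr rfl
        intro j hj
        have hjK : j < K := Finset.mem_range.mp hj
        have he : K - 1 - (K - 1 - j) = j := by omega
        rw [he]
      rw [hre]
      exact hmainT
    · rw [quad_smul_one, quad_smul_one]
      have hr : η ^ K * (lmaxGhi * xd0) = lmaxGhi * η ^ K * xd0 := by ring
      rw [← hpd, ← hxd0, hr]
      exact hmainT
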